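/- Let u be a positive solution of the radial problem (30). Assume that F_r(r,u) \le 0 for all r \in [0,1] and u > 0, where F(r,u) = \int_0^u f(r,t)\,dt, and that for each fixed r_0 \in [0,1) the function u \mapsto f(r_0,u) is either positive for all u > 0, or changes sign exactly once on (0,\infty), being negative for small u > 0 and positive for large u. Then u'(r) < 0 for all r \in (0,1), and f(0,u(0)) > 0. -/

import Mathlib

open Set

/-- `φ_p(t) = t |t|^{p-2}` (real exponent), with `φ_p(0)=0`. -/
noncomputable def phi (p t : ℝ) : ℝ := t * |t| ^ (p - 2)

/-- `φ_p'(t) = (p-1) |t|^{p-2}`. -/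
noncomputable def phi' (p t : ℝ) : ℝ := (p - 1) * |t| ^ (p - 2)

/-- The derivative of a function on `[0,1]` (one-sided at the endpoints). -/
noncomputable def du (u : ℝ → ℝ) : ℝ → ℝ := derivWithin u (Set.Icc 0 1)

/-- A positive (classical) solution of the radial problem (30):
`(φ_p(u'))' + ((n-1)/r) φ_p(u') + f(r,u) = 0` on `(0,1)`, `u'(0) = u(1) = 0`,
with `u ∈ C^1[0,1]`, `φ_p ∘ u' ∈ C^1((0,1])`, and `u > 0` on `[0,1)`. -/
structure RadialSol (p : ℝ) (n : ℕ) (f : ℝ → ℝ → ℝ) (u : ℝ → ℝ) : Prop where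
  reg : ContDiffOn ℝ 1 u (Set.Icc 0 1)
  reg' : ContDiffOn ℝ 1 (fun r => phi p (du u r)) (Set.Ioc 0 1)
  pos : ∀ r ∈ Set.Ico (0:ℝ) 1, 0 < u r
  bc0 : du u 0 = 0
  bc1 : u 1 = 0
  ode : ∀ r ∈ Set.Ioo (0:ℝ) 1,
    deriv (fun s => phi p (du u s)) r + ((n : ℝ) - 1) / r * phi p (du u r) + f r (u r) = 0

/-- A solution of the linearized problem (31) at `u`:
`(φ_p'(u') w')' + ((n-1)/r) φ_p'(u') w' + f_u(r,u) w = 0` on `(0,1)`, `w'(0) = w(1) = 0`. -/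
structure LinSol (p : ℝ) (n : ℕ) (f : ℝ → ℝ → ℝ) (u w : ℝ → ℝ) : Prop where
  reg : ContDiffOn ℝ 1 w (Set.Icc 0 1)
  reg' : ContDiffOn ℝ 1 (fun r => phi' p (du u r) * du w r) (Set.Ioc 0 1)
  ode : ∀ r ∈ Set.Ioo (0:ℝ) 1,
    deriv (fun s => phi' p (du u s) * du w s) r
      + ((n : ℝ) - 1) / r * (phi' p (du u r) * du w r) + deriv (f r) (u r) * w r = 0
  bc0 : du w 0 = 0
  bc1 : w 1 = 0

open Filter Topology MeasureTheory intervalIntegral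

lemma phi_zero (p : ℝ) : phi p 0 = 0 := by simp [phi]

lemma abs_phi {p : ℝ} (hp : 1 < p) (t : ℝ) : |phi p t| = |t| ^ (p - 1) := by
  rcases eq_or_ne t 0 with rfl | h
  · simp [phi, Real.zero_rpow (by linarith : p - 1 ≠ 0)]
  · have h1 : (0:ℝ) < |t| := abs_pos.2 h
    rw [phi, abs_mul, abs_of_nonneg (Real.rpow_nonneg (abs_nonneg t) _)]
    rw [show p - 1 = 1 + (p - 2) by ring, Real.rpow_add h1, Real.rpow_one]

lemma phi_nonneg {p t : ℝ} (h : 0 ≤ t) : 0 ≤ phi p t :=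
  mul_nonneg h (Real.rpow_nonneg (abs_nonneg t) _)

lemma phi_neg {p t : ℝ} (h : t < 0) : phi p t < 0 :=
  mul_neg_of_neg_of_pos h (Real.rpow_pos_of_pos (abs_pos.2 h.ne) _)

lemma continuous_phi {p : ℝ} (hp : 1 < p) : Continuous (phi p) := by
  rw [continuous_iff_continuousAt]
  intro t
  rcases eq_or_ne t 0 with rfl | h
  · have h2 : Tendsto (fun x : ℝ => |x| ^ (p - 1)) (𝓝 0) (𝓝 0) := by
      have h3 : ContinuousAt (fun x : ℝ => x ^ (p - 1)) |(0:ℝ)| := by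
        simpa using Real.continuousAt_rpow_const 0 (p - 1) (Or.inr (by linarith : (0:ℝ) ≤ p - 1))
      have := h3.comp continuous_abs.continuousAt (x := (0:ℝ))
      simpa [ContinuousAt, Function.comp_def, Real.zero_rpow (by linarith : p - 1 ≠ 0)] using this
    have : Tendsto (phi p) (𝓝 0) (𝓝 0) :=
      squeeze_zero_norm (fun x => by rw [Real.norm_eq_abs, abs_phi hp]) h2
    simpa [ContinuousAt, phi_zero] using this
  · exact continuousAt_id.mul
      ((Real.continuousAt_rpow_const _ _ (Or.inl (abs_ne_zero.2 h))).comp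
        continuous_abs.continuousAt)

lemma phi_phi {p : ℝ} (hp : 1 < p) (t : ℝ) : phi (p / (p - 1)) (phi p t) = t := by
  rcases eq_or_ne t 0 with rfl | h
  · simp [phi_zero]
  · have h1 : (0:ℝ) < |t| := abs_pos.2 h
    have hp1 : p - 1 ≠ 0 := by linarith
    rw [phi, abs_phi hp, ← Real.rpow_mul (abs_nonneg t),
      show (p-1) * (p / (p-1) - 2) = 2 - p by field_simp; ring]
    rw [phi, mul_assoc, ← Real.rpow_add h1, show p - 2 + (2 - p) = 0 by ring, Real.rpow_zero,
      mul_one]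

lemma self_mul_phi {p : ℝ} (hp : 1 < p) (t : ℝ) : t * phi p t = |t| ^ p := by
  rcases eq_or_ne t 0 with rfl | h
  · simp [phi_zero, Real.zero_rpow (by linarith : p ≠ 0)]
  · have h1 : (0:ℝ) < |t| := abs_pos.2 h
    have : t * t = |t| ^ (2:ℝ) := by
      rw [show (2:ℝ) = 1 + 1 by norm_num, Real.rpow_add h1, Real.rpow_one, abs_mul_abs_self]
    rw [phi, ← mul_assoc, this, ← Real.rpow_add h1, show 2 + (p - 2) = p by ring]

lemma hasDerivAt_abs_rpow' {q : ℝ} (hq : 1 < q) (t : ℝ) :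
    HasDerivAt (fun x : ℝ => |x| ^ q) (q * phi q t) t := by
  have := hasDerivAt_abs_rpow t hq
  convert this using 1
  rw [phi]; ring

set_option maxHeartbeats 1000000 in
/-- Lemma 2.2: monotonicity of positive solutions and positivity of `f(0,u(0))`. -/
theorem stmt0 (p : ℝ) (hp : 1 < p) (n : ℕ) (hn : 1 ≤ n)
    (f : ℝ → ℝ → ℝ)
    (hf : ContDiffOn ℝ 1 (fun z : ℝ × ℝ => f z.1 z.2) (Set.Icc 0 1 ×ˢ Set.Ici 0))
    (hFr : ∀ r ∈ Set.Icc (0:ℝ) 1, ∀ v > (0:ℝ),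
      deriv (fun s => ∫ t in (0:ℝ)..v, f s t) r ≤ 0)
    (hsign : ∀ r₀ ∈ Set.Ico (0:ℝ) 1,
      (∀ v > (0:ℝ), 0 < f r₀ v) ∨
      ∃ γ > (0:ℝ), (∀ v ∈ Set.Ioo (0:ℝ) γ, f r₀ v < 0) ∧ (∀ v > γ, 0 < f r₀ v))
    (u : ℝ → ℝ) (hu : RadialSol p n f u) :
    (∀ r ∈ Set.Ioo (0:ℝ) 1, du u r < 0) ∧ 0 < f 0 (u 0) := by
  have hp0 : (0:ℝ) < p := by linarith
  set q : ℝ := p / (p - 1) with hqdef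
  have hq : 1 < q := by rw [hqdef, lt_div_iff₀ (by linarith)]; linarith
  have hp1 : p - 1 ≠ 0 := by linarith
  have hpq : (p - 1)/p * q = 1 := by rw [hqdef]; field_simp
  have hIuniq : UniqueDiffOn ℝ (Icc (0:ℝ) 1) := uniqueDiffOn_Icc zero_lt_one
  set S : Set (ℝ × ℝ) := (Icc (0:ℝ) 1) ×ˢ (Ici (0:ℝ)) with hSdef
  have hSuniq : UniqueDiffOn ℝ S := hIuniq.prod (uniqueDiffOn_Ici 0)
  have hucont : ContinuousOn u (Icc 0 1) := hu.reg.continuousOn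
  have hducont : ContinuousOn (du u) (Icc 0 1) := hu.reg.continuousOn_derivWithin hIuniq le_rfl
  have hunn : ∀ r ∈ Icc (0:ℝ) 1, 0 ≤ u r := by
    intro r hr
    rcases eq_or_lt_of_le hr.2 with h | h
    · rw [h]; rw [hu.bc1]
    · exact (hu.pos r ⟨hr.1, h⟩).le
  have huderivWithin : ∀ r ∈ Icc (0:ℝ) 1, HasDerivWithinAt u (du u r) (Icc 0 1) r :=
    fun r hr => ((hu.reg.differentiableOn one_ne_zero) r hr).hasDerivWithinAt
  have hudAt : ∀ r ∈ Ioo (0:ℝ) 1, HasDerivAt u (du u r) r := fun r hr =>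
    (huderivWithin r (Ioo_subset_Icc_self hr)).hasDerivAt (Icc_mem_nhds hr.1 hr.2)
  set v : ℝ → ℝ := fun r => phi p (du u r) with hvdef
  have hvcont : ContinuousOn v (Icc 0 1) := (continuous_phi hp).comp_continuousOn hducont
  have hv0 : v 0 = 0 := by rw [hvdef]; simp only [hu.bc0]; exact phi_zero p
  have hvdAt : ∀ r ∈ Ioo (0:ℝ) 1, HasDerivAt v (deriv v r) r := by
    intro r hr
    have h1 : DifferentiableWithinAt ℝ v (Ioc 0 1) r :=
      hu.reg'.differentiableOn one_ne_zero r ⟨hr.1, hr.2.le⟩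
    exact (h1.differentiableAt (Ioc_mem_nhds hr.1 hr.2)).hasDerivAt
  have hode : ∀ r ∈ Ioo (0:ℝ) 1, deriv v r = -(((n:ℝ) - 1)/r * v r + f r (u r)) := by
    intro r hr
    have := hu.ode r hr
    rw [hvdef]
    linarith
  -- fderiv data
  set Df : ℝ × ℝ → ℝ × ℝ →L[ℝ] ℝ := fderivWithin ℝ (fun z : ℝ × ℝ => f z.1 z.2) S with hDfdef
  have hDfcont : ContinuousOn Df S := hf.continuousOn_fderivWithin hSuniq le_rfl
  have hfdiff : ∀ z ∈ S, HasFDerivWithinAt (fun z : ℝ × ℝ => f z.1 z.2) (Df z) S z :=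
    fun z hz => (hf.differentiableOn one_ne_zero z hz).hasFDerivWithinAt
  have hfcont : ContinuousOn (fun z : ℝ × ℝ => f z.1 z.2) S := hf.continuousOn
  -- bounds
  obtain ⟨Mu, hMu⟩ : ∃ M : ℝ, ∀ r ∈ Icc (0:ℝ) 1, u r ≤ M := by
    obtain ⟨C, hC⟩ := isCompact_Icc.exists_bound_of_continuousOn hucont
    exact ⟨C, fun r hr => (le_abs_self _).trans (hC r hr)⟩
  obtain ⟨Mu', hMu'⟩ : ∃ M : ℝ, ∀ r ∈ Icc (0:ℝ) 1, |du u r| ≤ M := by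
    obtain ⟨C, hC⟩ := isCompact_Icc.exists_bound_of_continuousOn hducont
    exact ⟨C, fun r hr => hC r hr⟩
  set K : Set (ℝ × ℝ) := (Icc (0:ℝ) 1) ×ˢ (Icc (0:ℝ) Mu) with hKdef
  have hKS : K ⊆ S := prod_mono subset_rfl Icc_subset_Ici_self
  have hKc : IsCompact K := isCompact_Icc.prod isCompact_Icc
  have hmemK : ∀ r ∈ Icc (0:ℝ) 1, ∀ t, 0 ≤ t → t ≤ u r → (r, t) ∈ K := by
    intro r hr t ht1 ht2
    exact ⟨hr, ht1, ht2.trans (hMu r hr)⟩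
  obtain ⟨Mf, hMf⟩ : ∃ M : ℝ, ∀ z ∈ K, |f z.1 z.2| ≤ M :=
    hKc.exists_bound_of_continuousOn (hfcont.mono hKS)
  obtain ⟨MD, hMD⟩ : ∃ M : ℝ, ∀ z ∈ K, ‖Df z‖ ≤ M :=
    hKc.exists_bound_of_continuousOn (hDfcont.mono hKS)
  have hMu'0 : 0 ≤ Mu' := (abs_nonneg _).trans (hMu' 0 (left_mem_Icc.2 zero_le_one))
  have hMu0 : 0 ≤ Mu := (hunn 0 (left_mem_Icc.2 zero_le_one)).trans
    (hMu 0 (left_mem_Icc.2 zero_le_one))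
  have h00K : ((0:ℝ), (0:ℝ)) ∈ K := ⟨left_mem_Icc.2 zero_le_one, le_rfl, hMu0⟩
  have hMf0 : 0 ≤ Mf := (abs_nonneg _).trans (hMf _ h00K)
  have hMD0 : 0 ≤ MD := (norm_nonneg _).trans (hMD _ h00K)
  -- composition helper
  have hcomp : ∀ (c : ℝ → ℝ × ℝ) (c' : ℝ × ℝ) (x : ℝ) (T : Set ℝ), MapsTo c T S →
      HasDerivWithinAt c c' T x → x ∈ T →
      HasDerivWithinAt (fun y => f (c y).1 (c y).2) (Df (c x) c') T x := by
    intro c c' x T hmaps hc hx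
    exact (hfdiff _ (hmaps hx)).comp_hasDerivWithinAt x hc hmaps
  have huIcc : uIcc (0:ℝ) 1 = Icc 0 1 := uIcc_of_le zero_le_one
  have huIoc : uIoc (0:ℝ) 1 = Ioc 0 1 := uIoc_of_le zero_le_one
  have hcurveCont : ∀ r ∈ Icc (0:ℝ) 1, ContinuousOn (fun s : ℝ => f r (u r * s)) (Icc 0 1) := by
    intro r hr
    have hcc : ContinuousOn (fun s : ℝ => ((r:ℝ), u r * s)) (Icc 0 1) := by fun_prop
    have := hfcont.comp hcc (fun s hs => ⟨hr, mul_nonneg (hunn r hr) hs.1⟩)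
    simpa [Function.comp_def] using this
  set g : ℝ → ℝ → ℝ := fun r s => u r * f r (u r * s) with hgdef
  set G : ℝ → ℝ := fun r => ∫ s in (0:ℝ)..1, g r s with hGdef
  have hgcont : ∀ r ∈ Icc (0:ℝ) 1, ContinuousOn (g r) (Icc 0 1) := fun r hr =>
    continuousOn_const.mul (hcurveCont r hr)
  have hgint : ∀ r ∈ Icc (0:ℝ) 1, IntervalIntegrable (g r) volume 0 1 := by
    intro r hr
    apply ContinuousOn.intervalIntegrable
    rw [huIcc]
    exact hgcont r hr
  have hsubst : ∀ (F : ℝ → ℝ) (y : ℝ),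
      ∫ s in (0:ℝ)..1, y * F (y * s) = ∫ t in (0:ℝ)..y, F t := by
    intro F y
    have := intervalIntegral.smul_integral_comp_mul_left (a := (0:ℝ)) (b := (1:ℝ)) F y
    rw [mul_zero, mul_one] at this
    rw [← this, intervalIntegral.integral_const_mul, smul_eq_mul]
  have hGval : ∀ r, G r = ∫ t in (0:ℝ)..(u r), f r t := fun r => hsubst (fun t => f r t) (u r)
  have hmemS : ∀ r ∈ Icc (0:ℝ) 1, ∀ s ∈ Icc (0:ℝ) 1, (r, u r * s) ∈ S := by
    intro r hr s hs
    exact ⟨hr, mul_nonneg (hunn r hr) hs.1⟩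
  have hgbound : ∀ r ∈ Icc (0:ℝ) 1, ∀ s ∈ Icc (0:ℝ) 1, |g r s| ≤ Mu * Mf := by
    intro r hr s hs
    rw [hgdef]
    simp only [abs_mul]
    apply mul_le_mul _ _ (abs_nonneg _) hMu0
    · rw [abs_of_nonneg (hunn r hr)]; exact hMu r hr
    · exact hMf (r, u r * s) (hmemK r hr _ (mul_nonneg (hunn r hr) hs.1)
        (mul_le_of_le_one_right (hunn r hr) hs.2))
  have hGcont : ContinuousOn G (Icc 0 1) := by
    intro r₀ hr₀
    apply intervalIntegral.continuousWithinAt_of_dominated_interval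
      (bound := fun _ => Mu * Mf)
    · filter_upwards [self_mem_nhdsWithin] with r hr
      apply ContinuousOn.aestronglyMeasurable _ measurableSet_uIoc
      rw [huIoc]
      exact (hgcont r hr).mono Ioc_subset_Icc_self
    · filter_upwards [self_mem_nhdsWithin] with r hr
      apply Eventually.of_forall
      intro s hs
      rw [huIoc] at hs
      rw [Real.norm_eq_abs]
      exact hgbound r hr s (Ioc_subset_Icc_self hs)
    · exact intervalIntegrable_const
    · apply Eventually.of_forall
      intro s hs
      rw [huIoc] at hs
      have hs' : s ∈ Icc (0:ℝ) 1 := Ioc_subset_Icc_self hs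
      apply ContinuousWithinAt.mul (hucont r₀ hr₀)
      have hcurve : ContinuousWithinAt (fun r : ℝ => ((r:ℝ), u r * s)) (Icc 0 1) r₀ :=
        continuousWithinAt_id.prodMk ((hucont r₀ hr₀).mul continuousWithinAt_const)
      have hcw := ContinuousWithinAt.comp (g := fun z : ℝ × ℝ => f z.1 z.2)
        (f := fun r : ℝ => ((r:ℝ), u r * s)) (hfcont _ (hmemS r₀ hr₀ s hs')) hcurve
        (fun r hr => hmemS r hr s hs')
      simpa [Function.comp_def] using hcw
  have hcq : Continuous (fun x : ℝ => |x| ^ q) :=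
    continuous_abs.rpow_const (fun x => Or.inr (by linarith))
  set E : ℝ → ℝ := fun r => (p - 1)/p * |v r| ^ q + G r with hEdef
  have hEcont : ContinuousOn E (Icc 0 1) :=
    (continuousOn_const.mul (hcq.comp_continuousOn hvcont)).add hGcont
  have hG1 : G 1 = 0 := by rw [hGval 1, hu.bc1]; simp
  have hE1 : 0 ≤ E 1 := by
    rw [hEdef]
    simp only [hG1, add_zero]
    exact mul_nonneg (div_nonneg (by linarith) (by linarith))
      (Real.rpow_nonneg (abs_nonneg _) _)

  -- ball inside (0,1)
  have hball : ∀ r ∈ Ioo (0:ℝ) 1, Metric.ball r (min r (1 - r)) ⊆ Ioo 0 1 := by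
    intro r hr x hx
    rw [Metric.mem_ball, Real.dist_eq, abs_lt] at hx
    constructor
    · have := min_le_left r (1 - r); linarith [hx.1]
    · have := min_le_right r (1 - r); linarith [hx.2]
  have hepos : ∀ r ∈ Ioo (0:ℝ) 1, 0 < min r (1 - r) := fun r hr =>
    lt_min hr.1 (by linarith [hr.2])
  -- derivative of s ↦ ∫_0^y f s t  (C1)
  have hC1 : ∀ r ∈ Ioo (0:ℝ) 1, ∀ y : ℝ, 0 < y → y ≤ Mu →
      HasDerivAt (fun s => ∫ t in (0:ℝ)..y, f s t)
        (∫ t in (0:ℝ)..y, Df (r, t) ((1:ℝ), (0:ℝ))) r := by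
    intro r hr y hy hyMu
    have hIocy : uIoc (0:ℝ) y = Ioc 0 y := uIoc_of_le hy.le
    have hmemKt : ∀ x ∈ Metric.ball r (min r (1 - r)), ∀ t ∈ Ioc (0:ℝ) y, (x, t) ∈ K := by
      intro x hx t ht
      exact ⟨Ioo_subset_Icc_self (hball r hr hx), ht.1.le, ht.2.trans hyMu⟩
    refine (intervalIntegral.hasDerivAt_integral_of_dominated_loc_of_deriv_le
      (F := fun s t => f s t) (F' := fun x t => Df (x, t) ((1:ℝ), (0:ℝ)))
      (bound := fun _ => MD) (Metric.ball_mem_nhds r (hepos r hr)) ?_ ?_ ?_ ?_ ?_ ?_).2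
    · filter_upwards [isOpen_Ioo.mem_nhds hr] with s hs
      apply ContinuousOn.aestronglyMeasurable _ measurableSet_uIoc
      rw [hIocy]
      have hcc : ContinuousOn (fun t : ℝ => ((s:ℝ), t)) (Ioc 0 y) := by fun_prop
      have := hfcont.comp hcc (fun t ht => ⟨Ioo_subset_Icc_self hs, ht.1.le⟩)
      simpa [Function.comp_def] using this
    · apply ContinuousOn.intervalIntegrable
      have hcc : ContinuousOn (fun t : ℝ => ((r:ℝ), t)) (uIcc 0 y) := by fun_prop
      have := hfcont.comp hcc (fun t ht => ⟨Ioo_subset_Icc_self hr, by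
        rw [uIcc_of_le hy.le] at ht; exact ht.1⟩)
      simpa [Function.comp_def] using this
    · apply ContinuousOn.aestronglyMeasurable _ measurableSet_uIoc
      rw [hIocy]
      have hcc : ContinuousOn (fun t : ℝ => ((r:ℝ), t)) (Ioc 0 y) := by fun_prop
      have hDc : ContinuousOn (fun t : ℝ => Df ((r:ℝ), t)) (Ioc 0 y) := by
        have := hDfcont.comp hcc (fun t ht => ⟨Ioo_subset_Icc_self hr, ht.1.le⟩)
        simpa [Function.comp_def] using this
      exact hDc.clm_apply continuousOn_const
    · apply Eventually.of_forall
      intro t ht x hx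
      rw [hIocy] at ht
      calc ‖Df (x, t) ((1:ℝ), (0:ℝ))‖ ≤ ‖Df (x, t)‖ * ‖((1:ℝ), (0:ℝ))‖ :=
            (Df (x, t)).le_opNorm _
        _ ≤ MD * 1 := by
            apply mul_le_mul (hMD _ (hmemKt x hx t ht)) _ (norm_nonneg _) hMD0
            rw [Prod.norm_def]
            simp
        _ = MD := mul_one MD
    · exact intervalIntegrable_const
    · apply Eventually.of_forall
      intro t ht x hx
      rw [hIocy] at ht
      have hxI : x ∈ Ioo (0:ℝ) 1 := hball r hr hx
      have hder : HasDerivWithinAt (fun s : ℝ => ((s:ℝ), t)) ((1:ℝ), (0:ℝ)) (Icc 0 1) x :=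
        (hasDerivWithinAt_id x _).prodMk (hasDerivWithinAt_const x _ t)
      have := hcomp (fun s : ℝ => ((s:ℝ), t)) ((1:ℝ), (0:ℝ)) x (Icc 0 1)
        (fun s hs => ⟨hs, ht.1.le⟩) hder (Ioo_subset_Icc_self hxI)
      exact this.hasDerivAt (Icc_mem_nhds hxI.1 hxI.2)
  -- FR r ≤ 0  (C2)
  have hC2 : ∀ r ∈ Ioo (0:ℝ) 1, (∫ t in (0:ℝ)..(u r), Df (r, t) ((1:ℝ), (0:ℝ))) ≤ 0 := by
    intro r hr
    have hur : 0 < u r := hu.pos r ⟨hr.1.le, hr.2⟩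
    have h1 := hC1 r hr (u r) hur (hMu r (Ioo_subset_Icc_self hr))
    have h2 := hFr r (Ioo_subset_Icc_self hr) (u r) hur
    rwa [h1.deriv] at h2
  -- derivative of G  (C3)
  have hsplit : ∀ z : ℝ × ℝ, ∀ c : ℝ,
      Df z ((1:ℝ), c) = Df z ((1:ℝ), (0:ℝ)) + c * Df z ((0:ℝ), (1:ℝ)) := by
    intro z c
    have h1 : ((1:ℝ), c) = ((1:ℝ), (0:ℝ)) + c • ((0:ℝ), (1:ℝ)) := by
      simp [Prod.ext_iff]
    rw [h1, map_add, _root_.map_smul, smul_eq_mul]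
  have hC3 : ∀ r ∈ Ioo (0:ℝ) 1, HasDerivAt G
      ((∫ t in (0:ℝ)..(u r), Df (r, t) ((1:ℝ), (0:ℝ))) + f r (u r) * du u r) r := by
    intro r hr
    have hrI : r ∈ Icc (0:ℝ) 1 := Ioo_subset_Icc_self hr
    set g' : ℝ → ℝ → ℝ :=
      fun x s => du u x * f x (u x * s) + u x * Df (x, u x * s) ((1:ℝ), du u x * s) with hg'def
    have key : HasDerivAt G (∫ s in (0:ℝ)..1, g' r s) r := by
      refine (intervalIntegral.hasDerivAt_integral_of_dominated_loc_of_deriv_le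
        (F := g) (F' := g') (bound := fun _ => Mu' * Mf + Mu * (MD * (1 + Mu')))
        (Metric.ball_mem_nhds r (hepos r hr)) ?_ ?_ ?_ ?_ ?_ ?_).2
      · filter_upwards [Icc_mem_nhds hr.1 hr.2] with x hx
        apply ContinuousOn.aestronglyMeasurable _ measurableSet_uIoc
        rw [huIoc]
        exact (hgcont x hx).mono Ioc_subset_Icc_self
      · exact hgint r hrI
      · apply ContinuousOn.aestronglyMeasurable _ measurableSet_uIoc
        rw [huIoc, hg'def]
        apply ContinuousOn.add
        · exact continuousOn_const.mul ((hcurveCont r hrI).mono Ioc_subset_Icc_self)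
        · apply continuousOn_const.mul
          apply ContinuousOn.clm_apply
          · have hcc : ContinuousOn (fun s : ℝ => ((r:ℝ), u r * s)) (Ioc 0 1) := by fun_prop
            have := hDfcont.comp hcc
              (fun s hs => hmemS r hrI s (Ioc_subset_Icc_self hs))
            simpa [Function.comp_def] using this
          · fun_prop
      · apply Eventually.of_forall
        intro s hs x hx
        rw [huIoc] at hs
        have hxI : x ∈ Ioo (0:ℝ) 1 := hball r hr hx
        have hxIcc : x ∈ Icc (0:ℝ) 1 := Ioo_subset_Icc_self hxI
        have hsIcc : s ∈ Icc (0:ℝ) 1 := Ioc_subset_Icc_self hs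
        have hmemK' : (x, u x * s) ∈ K := hmemK x hxIcc _ (mul_nonneg (hunn x hxIcc) hsIcc.1)
          (mul_le_of_le_one_right (hunn x hxIcc) hsIcc.2)
        rw [hg'def]
        apply (norm_add_le _ _).trans
        apply add_le_add
        · rw [norm_mul, Real.norm_eq_abs, Real.norm_eq_abs]
          exact mul_le_mul (hMu' x hxIcc) (hMf _ hmemK') (abs_nonneg _) hMu'0
        · rw [norm_mul, Real.norm_eq_abs, abs_of_nonneg (hunn x hxIcc)]
          apply mul_le_mul (hMu x hxIcc) _ (norm_nonneg _) hMu0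
          calc ‖Df (x, u x * s) ((1:ℝ), du u x * s)‖
              ≤ ‖Df (x, u x * s)‖ * ‖((1:ℝ), du u x * s)‖ := (Df _).le_opNorm _
            _ ≤ MD * (1 + Mu') := by
                apply mul_le_mul (hMD _ hmemK') _ (norm_nonneg _) hMD0
                rw [Prod.norm_def]
                simp only [Real.norm_eq_abs, abs_one]
                apply max_le (by linarith)
                rw [abs_mul]
                calc |du u x| * |s| ≤ Mu' * 1 := by
                      apply mul_le_mul (hMu' x hxIcc) _ (abs_nonneg _) hMu'0
                      rw [abs_of_nonneg hsIcc.1]; exact hsIcc.2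
                  _ ≤ 1 + Mu' := by linarith
      · exact intervalIntegrable_const
      · apply Eventually.of_forall
        intro s hs x hx
        rw [huIoc] at hs
        have hxI : x ∈ Ioo (0:ℝ) 1 := hball r hr hx
        have hxIcc : x ∈ Icc (0:ℝ) 1 := Ioo_subset_Icc_self hxI
        have hsIcc : s ∈ Icc (0:ℝ) 1 := Ioc_subset_Icc_self hs
        have hfpart : HasDerivAt (fun x' => f x' (u x' * s))
            (Df (x, u x * s) ((1:ℝ), du u x * s)) x := by
          have hder : HasDerivWithinAt (fun x' : ℝ => ((x':ℝ), u x' * s))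
              ((1:ℝ), du u x * s) (Icc 0 1) x :=
            (hasDerivWithinAt_id x _).prodMk ((huderivWithin x hxIcc).mul_const s)
          have := hcomp (fun x' : ℝ => ((x':ℝ), u x' * s)) ((1:ℝ), du u x * s) x (Icc 0 1)
            (fun x' hx' => hmemS x' hx' s hsIcc) hder hxIcc
          exact this.hasDerivAt (Icc_mem_nhds hxI.1 hxI.2)
        exact (hudAt x hxI).mul hfpart
    -- now rewrite the integral
    have hval : (∫ s in (0:ℝ)..1, g' r s)
        = (∫ t in (0:ℝ)..(u r), Df (r, t) ((1:ℝ), (0:ℝ))) + f r (u r) * du u r := by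
      set a1 : ℝ → ℝ := fun s => f r (u r * s) with ha1def
      set a2 : ℝ → ℝ := fun s => Df (r, u r * s) ((1:ℝ), (0:ℝ)) with ha2def
      set a3 : ℝ → ℝ := fun s => Df (r, u r * s) ((0:ℝ), (1:ℝ)) with ha3def
      have hcc : ContinuousOn (fun s : ℝ => ((r:ℝ), u r * s)) (Icc 0 1) := by fun_prop
      have hDc : ContinuousOn (fun s : ℝ => Df ((r:ℝ), u r * s)) (Icc 0 1) := by
        have := hDfcont.comp hcc (fun s hs => hmemS r hrI s hs)
        simpa [Function.comp_def] using this
      have ha1c : ContinuousOn a1 (Icc 0 1) := hcurveCont r hrI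
      have ha2c : ContinuousOn a2 (Icc 0 1) := hDc.clm_apply continuousOn_const
      have ha3c : ContinuousOn a3 (Icc 0 1) := hDc.clm_apply continuousOn_const
      have hrw : ∀ s : ℝ, g' r s = u r * a2 s + du u r * (a1 s + u r * s * a3 s) := by
        intro s
        simp only [hg'def, ha1def, ha2def, ha3def]
        rw [hsplit]
        ring
      have hint2 : IntervalIntegrable (fun s => u r * a2 s) volume 0 1 := by
        apply ContinuousOn.intervalIntegrable; rw [huIcc]
        exact continuousOn_const.mul ha2c
      have hint13 : IntervalIntegrable (fun s => du u r * (a1 s + u r * s * a3 s))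
          volume 0 1 := by
        apply ContinuousOn.intervalIntegrable; rw [huIcc]
        exact continuousOn_const.mul (ha1c.add ((continuousOn_const.mul
          continuousOn_id).mul ha3c))
      have hFTC : (∫ s in (0:ℝ)..1, (a1 s + u r * s * a3 s)) = f r (u r) := by
        have hder : ∀ s ∈ Ioo (0:ℝ) 1, HasDerivWithinAt (fun s => s * f r (u r * s))
            (a1 s + u r * s * a3 s) (Ioi s) s := by
          intro s hs
          have hfc : HasDerivWithinAt (fun s : ℝ => f r (u r * s))
              (Df (r, u r * s) ((0:ℝ), u r)) (Icc 0 1) s := by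
            have hder2 : HasDerivWithinAt (fun s : ℝ => ((r:ℝ), u r * s))
                ((0:ℝ), u r) (Icc 0 1) s := by
              apply HasDerivWithinAt.prodMk (hasDerivWithinAt_const s _ r)
              simpa using (hasDerivWithinAt_id s (Icc (0:ℝ) 1)).const_mul (u r)
            exact hcomp (fun s : ℝ => ((r:ℝ), u r * s)) ((0:ℝ), u r) s (Icc 0 1)
              (fun s' hs' => hmemS r hrI s' hs') hder2 (Ioo_subset_Icc_self hs)
          have hprod := (hasDerivWithinAt_id s (Icc (0:ℝ) 1)).mul hfc
          have hmem : Icc (0:ℝ) 1 ∈ 𝓝[Ioi s] s := by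
            rw [mem_nhdsWithin]
            exact ⟨Iio 1, isOpen_Iio, hs.2, fun x hx => ⟨(hs.1.trans hx.2).le, hx.1.le⟩⟩
          have := hprod.mono_of_mem_nhdsWithin hmem
          refine HasDerivWithinAt.congr_deriv this ?_
          have h03 : Df (r, u r * s) ((0:ℝ), u r) = u r * a3 s := by
            have h1 : ((0:ℝ), u r) = u r • ((0:ℝ), (1:ℝ)) := by simp [Prod.ext_iff]
            rw [h1, _root_.map_smul, smul_eq_mul, ha3def]
          rw [h03, ha1def]
          simp only [id_eq]
          ring
        have hcont2 : ContinuousOn (fun s : ℝ => s * f r (u r * s)) (Icc 0 1) :=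
          continuousOn_id.mul (hcurveCont r hrI)
        have hint3 : IntervalIntegrable (fun s => a1 s + u r * s * a3 s) volume 0 1 := by
          apply ContinuousOn.intervalIntegrable; rw [huIcc]
          exact ha1c.add ((continuousOn_const.mul continuousOn_id).mul ha3c)
        have := intervalIntegral.integral_eq_sub_of_hasDeriv_right_of_le zero_le_one
          hcont2 hder hint3
        rw [this]
        simp
      have hsub2 : (∫ s in (0:ℝ)..1, u r * a2 s)
          = ∫ t in (0:ℝ)..(u r), Df (r, t) ((1:ℝ), (0:ℝ)) :=
        hsubst (fun t => Df ((r:ℝ), t) ((1:ℝ), (0:ℝ))) (u r)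
      calc (∫ s in (0:ℝ)..1, g' r s)
          = ∫ s in (0:ℝ)..1, (u r * a2 s + du u r * (a1 s + u r * s * a3 s)) := by
            apply intervalIntegral.integral_congr
            intro s _
            exact hrw s
        _ = (∫ s in (0:ℝ)..1, u r * a2 s)
            + ∫ s in (0:ℝ)..1, du u r * (a1 s + u r * s * a3 s) :=
            intervalIntegral.integral_add hint2 hint13
        _ = (∫ t in (0:ℝ)..(u r), Df (r, t) ((1:ℝ), (0:ℝ))) + f r (u r) * du u r := by
            rw [hsub2, intervalIntegral.integral_const_mul, hFTC]
            ring
    rw [← hval]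
    exact key
  -- derivative of E  (C4) and sign (C5)
  have hC4 : ∀ r ∈ Ioo (0:ℝ) 1, HasDerivAt E
      (-(((n:ℝ) - 1)/r) * |du u r| ^ p
        + ∫ t in (0:ℝ)..(u r), Df (r, t) ((1:ℝ), (0:ℝ))) r := by
    intro r hr
    have hA := ((hasDerivAt_abs_rpow' hq (v r)).comp r (hvdAt r hr)).const_mul ((p - 1)/p)
    have htot := hA.add (hC3 r hr)
    have e1 : phi q (v r) = du u r := phi_phi hp (du u r)
    have e2 : du u r * v r = |du u r| ^ p := self_mul_phi hp (du u r)
    have h4 : (p - 1)/p * (q * du u r * deriv v r) = du u r * deriv v r := by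
      calc (p - 1)/p * (q * du u r * deriv v r)
          = ((p - 1)/p * q) * (du u r * deriv v r) := by ring
        _ = du u r * deriv v r := by rw [hpq, one_mul]
    have heq : (p - 1)/p * (q * phi q (v r) * deriv v r)
        + ((∫ t in (0:ℝ)..(u r), Df (r, t) ((1:ℝ), (0:ℝ))) + f r (u r) * du u r)
        = -(((n:ℝ) - 1)/r) * |du u r| ^ p
          + ∫ t in (0:ℝ)..(u r), Df (r, t) ((1:ℝ), (0:ℝ)) := by
      rw [e1, h4, hode r hr, ← e2]
      ring
    exact heq ▸ htot
  have hC5 : ∀ r ∈ Ioo (0:ℝ) 1,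
      (-(((n:ℝ) - 1)/r) * |du u r| ^ p
        + ∫ t in (0:ℝ)..(u r), Df (r, t) ((1:ℝ), (0:ℝ))) ≤ 0 := by
    intro r hr
    have hn1 : (1:ℝ) ≤ (n:ℝ) := by exact_mod_cast hn
    have h1 : 0 ≤ ((n:ℝ) - 1)/r := div_nonneg (by linarith) hr.1.le
    have h2 : (0:ℝ) ≤ |du u r| ^ p := Real.rpow_nonneg (abs_nonneg _) _
    have h3 := hC2 r hr
    nlinarith [mul_nonneg h1 h2]

  -- E is minimized at 1  (C6)
  have hEmono : ∀ r ∈ Ioc (0:ℝ) 1, E 1 ≤ E r := by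
    intro r hr
    rcases eq_or_lt_of_le hr.2 with h | h
    · rw [h]
    · have hanti : AntitoneOn E (Icc r 1) := by
        apply antitoneOn_of_deriv_nonpos (convex_Icc r 1)
          (hEcont.mono (Icc_subset_Icc hr.1.le le_rfl))
        · intro x hx
          rw [interior_Icc] at hx
          exact (hC4 x ⟨hr.1.trans hx.1, hx.2⟩).differentiableAt.differentiableWithinAt
        · intro x hx
          rw [interior_Icc] at hx
          have hx' : x ∈ Ioo (0:ℝ) 1 := ⟨hr.1.trans hx.1, hx.2⟩
          rw [(hC4 x hx').deriv]
          exact hC5 x hx'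
      exact hanti (left_mem_Icc.2 h.le) (right_mem_Icc.2 h.le) h.le
  -- E 0 = G 0 ≥ 0  (C7)
  have hG0 : 0 ≤ G 0 := by
    have h0cl : (0:ℝ) ∈ closure (Ioo (0:ℝ) 1) := by
      rw [closure_Ioo (zero_ne_one)]
      exact ⟨le_rfl, zero_le_one⟩
    have hne : (𝓝[Ioo (0:ℝ) 1] 0).NeBot := mem_closure_iff_nhdsWithin_neBot.1 h0cl
    have htend : Tendsto E (𝓝[Ioo (0:ℝ) 1] 0) (𝓝 (E 0)) :=
      (hEcont 0 (left_mem_Icc.2 zero_le_one)).mono Ioo_subset_Icc_self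
    have hev : ∀ᶠ x in 𝓝[Ioo (0:ℝ) 1] 0, E 1 ≤ E x := by
      filter_upwards [self_mem_nhdsWithin] with x hx
      exact hEmono x ⟨hx.1, hx.2.le⟩
    have hle : E 1 ≤ E 0 := ge_of_tendsto htend hev
    have hE0 : E 0 = G 0 := by
      have : E 0 = (p - 1)/p * |v 0| ^ q + G 0 := rfl
      rw [this, hv0, abs_zero, Real.zero_rpow (by linarith : q ≠ 0), mul_zero, zero_add]
    linarith [hE1]
  -- part 2
  have hpart2 : 0 < f 0 (u 0) := by
    have hu0 : 0 < u 0 := hu.pos 0 ⟨le_rfl, zero_lt_one⟩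
    rcases hsign 0 ⟨le_rfl, zero_lt_one⟩ with hpos | ⟨γ, hγ, hneg, hposg⟩
    · exact hpos (u 0) hu0
    · by_contra hle
      push_neg at hle
      have huγ : u 0 ≤ γ := by
        by_contra hgt
        push_neg at hgt
        exact absurd (hposg (u 0) hgt) (not_lt.2 hle)
      have hint : IntervalIntegrable (fun t => -(f 0 t)) volume 0 (u 0) := by
        apply ContinuousOn.intervalIntegrable
        apply ContinuousOn.neg
        have hcc : ContinuousOn (fun t : ℝ => ((0:ℝ), t)) (uIcc 0 (u 0)) := by fun_prop
        have := hfcont.comp hcc (fun t ht => ⟨left_mem_Icc.2 zero_le_one, by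
          rw [uIcc_of_le hu0.le] at ht; exact ht.1⟩)
        simpa [Function.comp_def] using this
      have hpos2 : 0 < ∫ t in (0:ℝ)..(u 0), -(f 0 t) := by
        apply intervalIntegral_pos_of_pos_on hint _ hu0
        intro t ht
        have : f 0 t < 0 := hneg t ⟨ht.1, lt_of_lt_of_le ht.2 huγ⟩
        linarith
      rw [intervalIntegral.integral_neg] at hpos2
      have hlt : (∫ t in (0:ℝ)..(u 0), f 0 t) < 0 := by linarith
      rw [← hGval 0] at hlt
      linarith
  refine ⟨?_, hpart2⟩
  -- part 1
  have hfucont : ContinuousOn (fun r => f r (u r)) (Icc 0 1) := by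
    have := hfcont.comp (continuousOn_id.prodMk hucont) (fun r hr => ⟨hr, hunn r hr⟩)
    simpa [Function.comp_def] using this
  obtain ⟨δ, hδpos, hδ⟩ : ∃ δ > (0:ℝ), ∀ s ∈ Metric.ball (0:ℝ) δ ∩ Icc 0 1, 0 < f s (u s) := by
    have hev : (fun r => f r (u r)) ⁻¹' (Ioi 0) ∈ 𝓝[Icc (0:ℝ) 1] 0 :=
      (hfucont 0 (left_mem_Icc.2 zero_le_one)) (Ioi_mem_nhds hpart2)
    rw [Metric.mem_nhdsWithin_iff] at hev
    obtain ⟨δ', hδ'pos, hδ'⟩ := hev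
    exact ⟨δ', hδ'pos, fun s hs => hδ' hs⟩
  -- the weighted derivative
  have hwder : ∀ r ∈ Ioo (0:ℝ) 1, HasDerivAt (fun s => s ^ (n - 1) * v s)
      (-(r ^ (n - 1) * f r (u r))) r := by
    intro r hr
    have h1 := (hasDerivAt_pow (n - 1) r).mul (hvdAt r hr)
    refine h1.congr_deriv ?_
    symm
    rw [hode r hr]
    rcases Nat.lt_or_ge n 2 with h2 | h2
    · have hn1 : n = 1 := by omega
      subst hn1
      norm_num
    · have hne : r ≠ 0 := ne_of_gt hr.1
      have hpow : (r:ℝ) ^ (n - 1) = r * r ^ (n - 2) := by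
        rw [show n - 1 = (n - 2) + 1 by omega, pow_succ]
        ring
      have hcast : ((n - 1 : ℕ) : ℝ) = (n:ℝ) - 1 := by
        rw [Nat.cast_sub hn, Nat.cast_one]
      rw [show n - 1 - 1 = n - 2 from by omega, hcast, hpow]
      field_simp
      ring
  have hwval : ∀ r ∈ Ioo (0:ℝ) 1, r ^ (n - 1) * v r
      = ∫ s in (0:ℝ)..r, -(s ^ (n - 1) * f s (u s)) := by
    intro r hr
    have hcont2 : ContinuousOn (fun s : ℝ => s ^ (n - 1) * v s) (Icc 0 r) :=
      (continuous_pow _).continuousOn.mul (hvcont.mono (Icc_subset_Icc le_rfl hr.2.le))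
    have hder : ∀ x ∈ Ioo (0:ℝ) r, HasDerivWithinAt (fun s => s ^ (n - 1) * v s)
        (-(x ^ (n - 1) * f x (u x))) (Ioi x) x := fun x hx =>
      (hwder x ⟨hx.1, hx.2.trans hr.2⟩).hasDerivWithinAt
    have hint : IntervalIntegrable (fun s => -(s ^ (n - 1) * f s (u s))) volume 0 r := by
      apply ContinuousOn.intervalIntegrable
      apply ContinuousOn.neg
      rw [uIcc_of_le hr.1.le]
      exact (continuous_pow _).continuousOn.mul
        (hfucont.mono (Icc_subset_Icc le_rfl hr.2.le))
    have heq := intervalIntegral.integral_eq_sub_of_hasDeriv_right_of_le hr.1.le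
      hcont2 hder hint
    rw [heq, hv0]
    simp
  have hdneg : ∀ r ∈ Ioo (0:ℝ) 1, r < δ → du u r < 0 := by
    intro r hr hrδ
    have hintpos : 0 < ∫ s in (0:ℝ)..r, s ^ (n - 1) * f s (u s) := by
      apply intervalIntegral_pos_of_pos_on
      · apply ContinuousOn.intervalIntegrable
        rw [uIcc_of_le hr.1.le]
        exact (continuous_pow _).continuousOn.mul
          (hfucont.mono (Icc_subset_Icc le_rfl hr.2.le))
      · intro x hx
        have hx1 : x ∈ Metric.ball (0:ℝ) δ ∩ Icc 0 1 := by
          constructor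
          · rw [Metric.mem_ball, Real.dist_eq, sub_zero, abs_of_pos hx.1]
            exact hx.2.trans hrδ
          · exact ⟨hx.1.le, (hx.2.trans hr.2).le⟩
        exact mul_pos (pow_pos hx.1 _) (hδ x hx1)
      · exact hr.1
    have hwneg : r ^ (n - 1) * v r < 0 := by
      rw [hwval r hr, intervalIntegral.integral_neg]
      linarith
    have hvneg : v r < 0 := by
      by_contra hge
      push_neg at hge
      nlinarith [pow_pos hr.1 (n - 1)]
    by_contra hge
    push_neg at hge
    exact absurd (phi_nonneg hge : (0:ℝ) ≤ v r) (not_le.2 hvneg)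
  intro r₀ hr₀
  by_contra hge0
  push_neg at hge0
  set δ₀ : ℝ := min (δ/2) (r₀/2) with hδ₀def
  have hδ₀pos : 0 < δ₀ := lt_min (by linarith) (by linarith [hr₀.1])
  have hδ₀r₀ : δ₀ ≤ r₀ := (min_le_right _ _).trans (by linarith [hr₀.1])
  have hδ₀δ : δ₀ < δ := (min_le_left _ _).trans_lt (by linarith)
  set A : Set ℝ := {x ∈ Icc δ₀ r₀ | 0 ≤ du u x} with hAdef
  have hAclosed : IsClosed A := by
    have hAeq : A = Icc δ₀ r₀ ∩ du u ⁻¹' (Ici 0) := by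
      ext x
      simp [hAdef, mem_sep_iff, and_comm]
    rw [hAeq]
    exact ContinuousOn.preimage_isClosed_of_isClosed
      (hducont.mono (Icc_subset_Icc hδ₀pos.le hr₀.2.le)) isClosed_Icc isClosed_Ici
  have hAne : A.Nonempty := ⟨r₀, ⟨⟨hδ₀r₀, le_rfl⟩, hge0⟩⟩
  have hAbdd : BddBelow A := ⟨δ₀, fun x hx => hx.1.1⟩
  set r₁ : ℝ := sInf A with hr₁def
  have hr₁A : r₁ ∈ A := hAclosed.csInf_mem hAne hAbdd
  have hr₁I : r₁ ∈ Ioo (0:ℝ) 1 := ⟨hδ₀pos.trans_le hr₁A.1.1, lt_of_le_of_lt hr₁A.1.2 hr₀.2⟩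
  have hprev : ∀ x ∈ Ioo (0:ℝ) r₁, du u x < 0 := by
    intro x hx
    rcases lt_or_ge x δ₀ with h | h
    · exact hdneg x ⟨hx.1, hx.2.trans hr₁I.2⟩ (h.trans hδ₀δ)
    · by_contra hge
      push_neg at hge
      have hxA : x ∈ A := ⟨⟨h, hx.2.le.trans hr₁A.1.2⟩, hge⟩
      exact absurd (csInf_le hAbdd hxA) (not_le.2 hx.2)
  have hdu0 : du u r₁ = 0 := by
    have hcl : r₁ ∈ closure (Ioo (0:ℝ) r₁) := by
      rw [closure_Ioo (ne_of_lt hr₁I.1)]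
      exact ⟨hr₁I.1.le, le_rfl⟩
    have hne2 : (𝓝[Ioo (0:ℝ) r₁] r₁).NeBot := mem_closure_iff_nhdsWithin_neBot.1 hcl
    have htend : Tendsto (du u) (𝓝[Ioo (0:ℝ) r₁] r₁) (𝓝 (du u r₁)) :=
      (hducont r₁ (Ioo_subset_Icc_self hr₁I)).mono
        (fun x hx => ⟨hx.1.le, (hx.2.trans hr₁I.2).le⟩)
    have hle : du u r₁ ≤ 0 := le_of_tendsto htend (by
      filter_upwards [self_mem_nhdsWithin] with x hx
      exact (hprev x hx).le)
    exact le_antisymm hle hr₁A.2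
  have hv1 : v r₁ = 0 := by
    have : v r₁ = phi p (du u r₁) := rfl
    rw [this, hdu0, phi_zero]
  have hfle : f r₁ (u r₁) ≤ 0 := by
    by_contra hfpos
    push_neg at hfpos
    have hdv : deriv v r₁ < 0 := by
      rw [hode r₁ hr₁I, hv1]
      simp only [mul_zero, zero_add]
      linarith
    have hslope := hvdAt r₁ hr₁I
    rw [hasDerivAt_iff_tendsto_slope] at hslope
    have hslope2 : Tendsto (slope v r₁) (𝓝[Ioo (0:ℝ) r₁] r₁) (𝓝 (deriv v r₁)) :=
      hslope.mono_left (nhdsWithin_mono _ (fun x hx => ne_of_lt hx.2))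
    have hcl : r₁ ∈ closure (Ioo (0:ℝ) r₁) := by
      rw [closure_Ioo (ne_of_lt hr₁I.1)]
      exact ⟨hr₁I.1.le, le_rfl⟩
    have hne2 : (𝓝[Ioo (0:ℝ) r₁] r₁).NeBot := mem_closure_iff_nhdsWithin_neBot.1 hcl
    have hev2 : ∀ᶠ x in 𝓝[Ioo (0:ℝ) r₁] r₁, slope v r₁ x < 0 :=
      hslope2.eventually_lt_const hdv
    obtain ⟨x, hxs, hxm⟩ := (hev2.and self_mem_nhdsWithin).exists
    have hvx : v x < 0 := phi_neg (hprev x hxm)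
    rw [slope_def_field, hv1, sub_zero] at hxs
    have hx1 : x - r₁ < 0 := by linarith [hxm.2]
    have : 0 < v x / (x - r₁) := div_pos_of_neg_of_neg hvx hx1
    linarith
  have hu1 : 0 < u r₁ := hu.pos r₁ ⟨hr₁I.1.le, hr₁I.2⟩
  rcases hsign r₁ ⟨hr₁I.1.le, hr₁I.2⟩ with hpos | ⟨γ, hγ, hneg, hposg⟩
  · exact absurd (hpos (u r₁) hu1) (not_lt.2 hfle)
  · have huγ : u r₁ ≤ γ := by
      by_contra hgt
      push_neg at hgt
      exact absurd (hposg (u r₁) hgt) (not_lt.2 hfle)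
    have hint : IntervalIntegrable (fun t => -(f r₁ t)) volume 0 (u r₁) := by
      apply ContinuousOn.intervalIntegrable
      apply ContinuousOn.neg
      have hcc : ContinuousOn (fun t : ℝ => ((r₁:ℝ), t)) (uIcc 0 (u r₁)) := by fun_prop
      have := hfcont.comp hcc (fun t ht => ⟨Ioo_subset_Icc_self hr₁I, by
        rw [uIcc_of_le hu1.le] at ht; exact ht.1⟩)
      simpa [Function.comp_def] using this
    have hpos2 : 0 < ∫ t in (0:ℝ)..(u r₁), -(f r₁ t) := by
      apply intervalIntegral_pos_of_pos_on hint _ hu1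
      intro t ht
      have : f r₁ t < 0 := hneg t ⟨ht.1, lt_of_lt_of_le ht.2 huγ⟩
      linarith
    rw [intervalIntegral.integral_neg] at hpos2
    have hFneg : (∫ t in (0:ℝ)..(u r₁), f r₁ t) < 0 := by linarith
    have hEr₁ : E r₁ < 0 := by
      have hEval : E r₁ = (p - 1)/p * |v r₁| ^ q + G r₁ := rfl
      rw [hEval, hv1, abs_zero, Real.zero_rpow (by linarith : q ≠ 0), mul_zero, zero_add,
        hGval r₁]
      exact hFneg
    have := hEmono r₁ ⟨hr₁I.1, hr₁I.2.le⟩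
    linarith
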